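/- The Weyl group of G: the quotient of the normalizer of the maximal torus T × {0} in G = (SL(2,ℂ) × SL(2,ℂ)) ⋊ ℤ/2ℤ by T × {0} is isomorphic to the dihedral group of order 8 (DihedralGroup 4 in Mathlib). -/

import Mathlib

open Matrix

abbrev SL2 := Matrix.SpecialLinearGroup (Fin 2) ℂ

/-- The swap automorphism of `SL(2,ℂ) × SL(2,ℂ)`. -/
def swapAut : MulAut (SL2 × SL2) := (MulEquiv.prodComm : (SL2 × SL2) ≃* (SL2 × SL2))

lemma swapAut_apply (p : SL2 × SL2) : swapAut p = p.swap := rfl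

lemma swapAut_sq : swapAut * swapAut = 1 := by
  apply MulEquiv.ext
  intro x
  rw [MulAut.mul_apply, swapAut_apply, swapAut_apply, Prod.swap_swap]
  rfl

/-- The homomorphism `ℤ/2ℤ →* MulAut N` determined by an automorphism of order
dividing 2, sending the nontrivial element to that automorphism. -/
def hom2 {N : Type*} [Group N] (σ : MulAut N) (h : σ * σ = 1) :
    Multiplicative (ZMod 2) →* MulAut N where
  toFun e := σ ^ (Multiplicative.toAdd e).val
  map_one' := by simp
  map_mul' a b := by
    have h2 : σ ^ 2 = 1 := by rw [pow_two]; exact h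
    show σ ^ (Multiplicative.toAdd (a * b)).val = _
    rw [toAdd_mul, ZMod.val_add, ← pow_eq_pow_mod _ h2, pow_add]

/-- The group `G = (SL(2,ℂ) × SL(2,ℂ)) ⋊ ℤ/2ℤ`, the nontrivial element of `ℤ/2ℤ`
acting by swapping the two factors. -/
abbrev Ggrp := (SL2 × SL2) ⋊[hom2 swapAut swapAut_sq] Multiplicative (ZMod 2)

/-- The maximal torus `T = {(diag(t,t⁻¹), diag(s,s⁻¹)) : t,s ∈ ℂˣ}` of
`SL(2,ℂ) × SL(2,ℂ)`, i.e. the subgroup of pairs of diagonal matrices. -/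
def Tsub : Subgroup (SL2 × SL2) where
  carrier := {p | (p.1 : Matrix (Fin 2) (Fin 2) ℂ) 0 1 = 0 ∧
      (p.1 : Matrix (Fin 2) (Fin 2) ℂ) 1 0 = 0 ∧
      (p.2 : Matrix (Fin 2) (Fin 2) ℂ) 0 1 = 0 ∧
      (p.2 : Matrix (Fin 2) (Fin 2) ℂ) 1 0 = 0}
  one_mem' := by
    simp [Set.mem_setOf_eq, Matrix.SpecialLinearGroup.coe_one, Matrix.one_apply]
  mul_mem' := by
    intro a b ha hb
    obtain ⟨h1, h2, h3, h4⟩ := ha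
    obtain ⟨g1, g2, g3, g4⟩ := hb
    refine ⟨?_, ?_, ?_, ?_⟩ <;>
      simp [Prod.fst_mul, Prod.snd_mul, Matrix.SpecialLinearGroup.coe_mul, Matrix.mul_apply,
        Fin.sum_univ_two, h1, h2, h3, h4, g1, g2, g3, g4]
  inv_mem' := by
    intro a ha
    obtain ⟨h1, h2, h3, h4⟩ := ha
    refine ⟨?_, ?_, ?_, ?_⟩ <;>
      simp [Prod.fst_inv, Prod.snd_inv, Matrix.SpecialLinearGroup.coe_inv,
        Matrix.adjugate_fin_two, h1, h2, h3, h4]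

/-- The maximal torus `T × {0}` of `G`. -/
def TG : Subgroup Ggrp := Tsub.map (SemidirectProduct.inl : (SL2 × SL2) →* Ggrp)


section WeylAux

open DihedralGroup SemidirectProduct

/-- A matrix in `SL2` is diagonal or antidiagonal. -/
def Pd (A : SL2) : Prop :=
  ((A : Matrix (Fin 2) (Fin 2) ℂ) 0 1 = 0 ∧ (A : Matrix (Fin 2) (Fin 2) ℂ) 1 0 = 0) ∨
  ((A : Matrix (Fin 2) (Fin 2) ℂ) 0 0 = 0 ∧ (A : Matrix (Fin 2) (Fin 2) ℂ) 1 1 = 0)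

lemma detA (A : SL2) :
    (A : Matrix (Fin 2) (Fin 2) ℂ) 0 0 * (A : Matrix (Fin 2) (Fin 2) ℂ) 1 1 -
      (A : Matrix (Fin 2) (Fin 2) ℂ) 0 1 * (A : Matrix (Fin 2) (Fin 2) ℂ) 1 0 = 1 := by
  have h := A.2
  rwa [Matrix.det_fin_two] at h

lemma diag_ne (A : SL2) (h0 : (A : Matrix (Fin 2) (Fin 2) ℂ) 0 1 = 0) :
    (A : Matrix (Fin 2) (Fin 2) ℂ) 0 0 ≠ 0 ∧ (A : Matrix (Fin 2) (Fin 2) ℂ) 1 1 ≠ 0 := by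
  have hd := detA A
  rw [h0] at hd
  constructor <;> intro h <;> rw [h] at hd <;> simp at hd

lemma antidiag_ne (A : SL2) (h0 : (A : Matrix (Fin 2) (Fin 2) ℂ) 0 0 = 0)
    (h1 : (A : Matrix (Fin 2) (Fin 2) ℂ) 1 1 = 0) :
    (A : Matrix (Fin 2) (Fin 2) ℂ) 0 1 ≠ 0 ∧ (A : Matrix (Fin 2) (Fin 2) ℂ) 1 0 ≠ 0 := by
  have hd := detA A
  rw [h0, h1] at hd
  constructor <;> intro h <;> rw [h] at hd <;> simp at hd

lemma Pd_of (A : SL2)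
    (h1 : (A : Matrix (Fin 2) (Fin 2) ℂ) 0 0 * (A : Matrix (Fin 2) (Fin 2) ℂ) 0 1 = 0)
    (h2 : (A : Matrix (Fin 2) (Fin 2) ℂ) 1 0 * (A : Matrix (Fin 2) (Fin 2) ℂ) 1 1 = 0) : Pd A := by
  have hd := detA A
  rcases mul_eq_zero.mp h1 with h | h <;> rcases mul_eq_zero.mp h2 with g | g
  · rw [h, g] at hd; simp at hd
  · exact Or.inr ⟨h, g⟩
  · exact Or.inl ⟨h, g⟩
  · rw [h, g] at hd; simp at hd

lemma Pd_inv (A : SL2) (hA : Pd A) : Pd A⁻¹ := by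
  rcases hA with ⟨h1, h2⟩ | ⟨h1, h2⟩
  · exact Or.inl (by simp [Matrix.SpecialLinearGroup.coe_inv, Matrix.adjugate_fin_two, h1, h2])
  · exact Or.inr (by simp [Matrix.SpecialLinearGroup.coe_inv, Matrix.adjugate_fin_two, h1, h2])

lemma Pd_conj (A : SL2) (hA : Pd A) (t : SL2)
    (h1 : (t : Matrix (Fin 2) (Fin 2) ℂ) 0 1 = 0) (h2 : (t : Matrix (Fin 2) (Fin 2) ℂ) 1 0 = 0) :
    ((A * t * A⁻¹ : SL2) : Matrix (Fin 2) (Fin 2) ℂ) 0 1 = 0 ∧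
    ((A * t * A⁻¹ : SL2) : Matrix (Fin 2) (Fin 2) ℂ) 1 0 = 0 := by
  rcases hA with ⟨ha, hb⟩ | ⟨ha, hb⟩ <;>
    constructor <;>
    simp [Matrix.SpecialLinearGroup.coe_inv, Matrix.adjugate_fin_two, Matrix.mul_apply,
      Fin.sum_univ_two, ha, hb, h1, h2]

lemma zmod2_cases (x : ZMod 2) : x = 0 ∨ x = 1 := by revert x; decide

lemma hom2_apply_swap (e : Multiplicative (ZMod 2)) (p : SL2 × SL2) :
    (hom2 swapAut swapAut_sq) e p =
      if Multiplicative.toAdd e = 0 then p else p.swap := by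
  rcases zmod2_cases (Multiplicative.toAdd e) with h | h
  · rw [if_pos h]
    show (swapAut ^ (Multiplicative.toAdd e).val) p = p
    rw [h]
    rfl
  · rw [if_neg (by rw [h]; exact one_ne_zero)]
    show (swapAut ^ (Multiplicative.toAdd e).val) p = p.swap
    rw [h]
    show (swapAut ^ 1) p = p.swap
    rw [pow_one, swapAut_apply]

lemma mem_TG_iff (x : Ggrp) : x ∈ TG ↔ x.left ∈ Tsub ∧ x.right = 1 := by
  constructor
  · rintro ⟨p, hp, rfl⟩
    exact ⟨hp, rfl⟩
  · rintro ⟨hp, hr⟩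
    exact ⟨x.left, hp, by ext <;> simp [hr]⟩

lemma swap_mem_Tsub {p : SL2 × SL2} (hp : p ∈ Tsub) : p.swap ∈ Tsub := by
  obtain ⟨h1, h2, h3, h4⟩ := hp
  exact ⟨h3, h4, h1, h2⟩

lemma conj_inl_left (x : Ggrp) (q : SL2 × SL2) :
    (x * SemidirectProduct.inl q * x⁻¹).left =
      x.left * (hom2 swapAut swapAut_sq) x.right q * x.left⁻¹ := by
  simp only [SemidirectProduct.mul_left, SemidirectProduct.inv_left,
    SemidirectProduct.mul_right, SemidirectProduct.left_inl, SemidirectProduct.right_inl,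
    mul_one, map_inv, _root_.map_mul, _root_.map_one, MulAut.one_apply, MulAut.apply_inv_self, mul_assoc]

lemma conj_inl_right (x : Ggrp) (q : SL2 × SL2) :
    (x * SemidirectProduct.inl q * x⁻¹).right = 1 := by
  simp [SemidirectProduct.mul_right, SemidirectProduct.inv_right]

/-- If `Pd` holds on both components, conjugation preserves `TG`. -/
lemma conj_mem_TG (x : Ggrp) (hP : Pd x.left.1 ∧ Pd x.left.2) :
    ∀ t ∈ TG, x * t * x⁻¹ ∈ TG := by
  rintro t ⟨p, hp, rfl⟩
  rw [mem_TG_iff]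
  refine ⟨?_, conj_inl_right x p⟩
  rw [conj_inl_left, hom2_apply_swap]
  have key : ∀ q ∈ Tsub, x.left * q * x.left⁻¹ ∈ Tsub := by
    intro q hq
    obtain ⟨h1, h2, h3, h4⟩ := hq
    have c1 := Pd_conj x.left.1 hP.1 q.1 h1 h2
    have c2 := Pd_conj x.left.2 hP.2 q.2 h3 h4
    exact ⟨c1.1, c1.2, c2.1, c2.2⟩
  split
  · exact key p hp
  · exact key p.swap (swap_mem_Tsub hp)

lemma Pd_left_inv (x : Ggrp) (hP : Pd x.left.1 ∧ Pd x.left.2) :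
    Pd x⁻¹.left.1 ∧ Pd x⁻¹.left.2 := by
  rw [SemidirectProduct.inv_left, hom2_apply_swap]
  rcases zmod2_cases (Multiplicative.toAdd (x.right)⁻¹) with h | h
  · rw [h, if_pos rfl]
    exact ⟨Pd_inv _ hP.1, Pd_inv _ hP.2⟩
  · rw [h, if_neg one_ne_zero]
    exact ⟨Pd_inv _ hP.2, Pd_inv _ hP.1⟩

/-- The test diagonal element. -/
noncomputable def u2 : SL2 := ⟨!![(2 : ℂ), 0; 0, (2 : ℂ)⁻¹], by norm_num [Matrix.det_fin_two_of]⟩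

lemma u2_mem1 : ((u2, 1) : SL2 × SL2) ∈ Tsub := by
  refine ⟨?_, ?_, ?_, ?_⟩
  · show (!![(2 : ℂ), 0; 0, (2 : ℂ)⁻¹]) 0 1 = 0; norm_num
  · show (!![(2 : ℂ), 0; 0, (2 : ℂ)⁻¹]) 1 0 = 0; norm_num
  · simp [Matrix.SpecialLinearGroup.coe_one, Matrix.one_apply]
  · simp [Matrix.SpecialLinearGroup.coe_one, Matrix.one_apply]

lemma u2_mem2 : ((1, u2) : SL2 × SL2) ∈ Tsub := swap_mem_Tsub u2_mem1

lemma Pd_of_conj_u2 (A : SL2)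
    (h1 : ((A * u2 * A⁻¹ : SL2) : Matrix (Fin 2) (Fin 2) ℂ) 0 1 = 0)
    (h2 : ((A * u2 * A⁻¹ : SL2) : Matrix (Fin 2) (Fin 2) ℂ) 1 0 = 0) : Pd A := by
  have e1 : ((A * u2 * A⁻¹ : SL2) : Matrix (Fin 2) (Fin 2) ℂ) 0 1 =
      (A : Matrix (Fin 2) (Fin 2) ℂ) 0 0 * (A : Matrix (Fin 2) (Fin 2) ℂ) 0 1 *
        ((2 : ℂ)⁻¹ - 2) := by
    rw [Matrix.SpecialLinearGroup.coe_mul, Matrix.SpecialLinearGroup.coe_mul]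
    simp [Matrix.SpecialLinearGroup.coe_inv, Matrix.adjugate_fin_two, Matrix.mul_apply,
      Fin.sum_univ_two, u2]
    ring
  have e2 : ((A * u2 * A⁻¹ : SL2) : Matrix (Fin 2) (Fin 2) ℂ) 1 0 =
      (A : Matrix (Fin 2) (Fin 2) ℂ) 1 0 * (A : Matrix (Fin 2) (Fin 2) ℂ) 1 1 *
        ((2 : ℂ) - (2 : ℂ)⁻¹) := by
    rw [Matrix.SpecialLinearGroup.coe_mul, Matrix.SpecialLinearGroup.coe_mul]
    simp [Matrix.SpecialLinearGroup.coe_inv, Matrix.adjugate_fin_two, Matrix.mul_apply,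
      Fin.sum_univ_two, u2]
    ring
  rw [e1] at h1
  rw [e2] at h2
  have c1 : ((2 : ℂ)⁻¹ - 2) ≠ 0 := by norm_num
  have c2 : ((2 : ℂ) - (2 : ℂ)⁻¹) ≠ 0 := by norm_num
  refine Pd_of A ?_ ?_
  · rcases mul_eq_zero.mp h1 with h | h
    · exact h
    · exact absurd h c1
  · rcases mul_eq_zero.mp h2 with h | h
    · exact h
    · exact absurd h c2

/-- Characterization of the normalizer of `TG`. -/
lemma mem_norm_iff (x : Ggrp) : x ∈ Subgroup.normalizer (TG : Set Ggrp) ↔ Pd x.left.1 ∧ Pd x.left.2 := by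
  constructor
  · intro hx
    have hq : ∀ q ∈ Tsub, x.left * (hom2 swapAut swapAut_sq) x.right q * x.left⁻¹ ∈ Tsub := by
      intro q hq
      have h1 : SemidirectProduct.inl (φ := hom2 swapAut swapAut_sq) q ∈ TG := ⟨q, hq, rfl⟩
      have h2 := (Subgroup.mem_normalizer_iff.mp hx _).mp h1
      rw [mem_TG_iff, conj_inl_left] at h2
      exact h2.1
    have key : ∀ p ∈ Tsub, x.left * p * x.left⁻¹ ∈ Tsub := by
      intro p hp
      rcases zmod2_cases (Multiplicative.toAdd x.right) with h | h
      · have := hq p hp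
        rwa [hom2_apply_swap, h, if_pos rfl] at this
      · have := hq p.swap (swap_mem_Tsub hp)
        rwa [hom2_apply_swap, h, if_neg one_ne_zero, Prod.swap_swap] at this
    have k1 := key (u2, 1) u2_mem1
    have k2 := key (1, u2) u2_mem2
    obtain ⟨a1, a2, a3, a4⟩ := k1
    obtain ⟨b1, b2, b3, b4⟩ := k2
    exact ⟨Pd_of_conj_u2 _ a1 a2, Pd_of_conj_u2 _ b3 b4⟩
  · intro hP
    rw [Subgroup.mem_normalizer_iff]
    intro t
    constructor
    · exact fun ht => conj_mem_TG x hP t ht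
    · intro ht
      have := conj_mem_TG x⁻¹ (Pd_left_inv x hP) _ ht
      simpa [mul_assoc] using this

/-- The "antidiagonality" invariant. -/
noncomputable def eps (A : SL2) : ZMod 2 :=
  if (A : Matrix (Fin 2) (Fin 2) ℂ) 0 1 = 0 then 0 else 1

lemma eps_eq_zero_iff (A : SL2) : eps A = 0 ↔ (A : Matrix (Fin 2) (Fin 2) ℂ) 0 1 = 0 := by
  unfold eps
  by_cases h : (A : Matrix (Fin 2) (Fin 2) ℂ) 0 1 = 0
  · simp [h]
  · simp [h]

lemma eps_mul (A B : SL2) (hA : Pd A) (hB : Pd B) : eps (A * B) = eps A + eps B := by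
  have hAB : ((A * B : SL2) : Matrix (Fin 2) (Fin 2) ℂ) 0 1 =
      (A : Matrix (Fin 2) (Fin 2) ℂ) 0 0 * (B : Matrix (Fin 2) (Fin 2) ℂ) 0 1 +
      (A : Matrix (Fin 2) (Fin 2) ℂ) 0 1 * (B : Matrix (Fin 2) (Fin 2) ℂ) 1 1 := by
    simp [Matrix.mul_apply, Fin.sum_univ_two]
  unfold eps
  rcases hA with ⟨a1, a2⟩ | ⟨a1, a2⟩ <;> rcases hB with ⟨b1, b2⟩ | ⟨b1, b2⟩
  · have h0 : ((A * B : SL2) : Matrix (Fin 2) (Fin 2) ℂ) 0 1 = 0 := by rw [hAB, a1, b1]; ring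
    rw [if_pos h0, if_pos a1, if_pos b1]
    decide
  · have h0 : ((A * B : SL2) : Matrix (Fin 2) (Fin 2) ℂ) 0 1 ≠ 0 := by
      rw [hAB, b2]
      simpa using mul_ne_zero (diag_ne A a1).1 (antidiag_ne B b1 b2).1
    rw [if_neg h0, if_pos a1, if_neg (antidiag_ne B b1 b2).1]
    decide
  · have h0 : ((A * B : SL2) : Matrix (Fin 2) (Fin 2) ℂ) 0 1 ≠ 0 := by
      rw [hAB, b1]
      simpa using mul_ne_zero (antidiag_ne A a1 a2).1 (diag_ne B b1).2
    rw [if_neg h0, if_neg (antidiag_ne A a1 a2).1, if_pos b1]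
    decide
  · have h0 : ((A * B : SL2) : Matrix (Fin 2) (Fin 2) ℂ) 0 1 = 0 := by rw [hAB, a1, b2]; ring
    rw [if_pos h0, if_neg (antidiag_ne A a1 a2).1, if_neg (antidiag_ne B b1 b2).1]
    decide

/-- Explicit labelling of the dihedral group of order 8 by three `ZMod 2` parameters. -/
def Delem (a b c : ZMod 2) : DihedralGroup 4 :=
  (sr 0) ^ a.val * (sr 2) ^ b.val * (sr 1) ^ c.val

lemma Delem_mul : ∀ a b c a' b' c' : ZMod 2,
    Delem a b c * Delem a' b' c' =
      Delem (a + if c = 0 then a' else b') (b + if c = 0 then b' else a') (c + c') := by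
  decide

lemma Delem_eq_one : ∀ a b c : ZMod 2, Delem a b c = 1 ↔ a = 0 ∧ b = 0 ∧ c = 0 := by
  decide

lemma Delem_surj : ∀ g : DihedralGroup 4, ∃ a b c : ZMod 2, Delem a b c = g := by
  decide

/-- The homomorphism from the normalizer onto the dihedral group. -/
noncomputable def Psi : Subgroup.normalizer (TG : Set Ggrp) →* DihedralGroup 4 where
  toFun x := Delem (eps (x : Ggrp).left.1) (eps (x : Ggrp).left.2)
    (Multiplicative.toAdd (x : Ggrp).right)
  map_one' := by
    show Delem (eps (1 : SL2)) (eps (1 : SL2))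
      (Multiplicative.toAdd (1 : Multiplicative (ZMod 2))) = 1
    have he : eps (1 : SL2) = 0 := by
      simp [eps, Matrix.SpecialLinearGroup.coe_one, Matrix.one_apply]
    rw [he, toAdd_one]
    decide
  map_mul' x y := by
    have hx := (mem_norm_iff _).mp x.2
    have hy := (mem_norm_iff _).mp y.2
    show Delem (eps ((x * y : Subgroup.normalizer (TG : Set Ggrp)) : Ggrp).left.1)
        (eps ((x * y : Subgroup.normalizer (TG : Set Ggrp)) : Ggrp).left.2)
        (Multiplicative.toAdd ((x * y : Subgroup.normalizer (TG : Set Ggrp)) : Ggrp).right) =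
      Delem (eps (x : Ggrp).left.1) (eps (x : Ggrp).left.2)
        (Multiplicative.toAdd (x : Ggrp).right) *
      Delem (eps (y : Ggrp).left.1) (eps (y : Ggrp).left.2)
        (Multiplicative.toAdd (y : Ggrp).right)
    have hco : ((x * y : Subgroup.normalizer (TG : Set Ggrp)) : Ggrp) = (x : Ggrp) * (y : Ggrp) := rfl
    rw [hco, SemidirectProduct.mul_left, SemidirectProduct.mul_right, hom2_apply_swap,
      toAdd_mul, Delem_mul]
    rcases zmod2_cases (Multiplicative.toAdd ((x : Ggrp)).right) with h | h
    · rw [h, if_pos rfl, if_pos rfl, if_pos rfl]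
      simp only [Prod.fst_mul, Prod.snd_mul]
      rw [eps_mul _ _ hx.1 hy.1, eps_mul _ _ hx.2 hy.2]
    · rw [h, if_neg one_ne_zero, if_neg one_ne_zero, if_neg one_ne_zero]
      simp only [Prod.fst_mul, Prod.snd_mul, Prod.fst_swap, Prod.snd_swap]
      rw [eps_mul _ _ hx.1 hy.2, eps_mul _ _ hx.2 hy.1]

lemma Psi_ker : Psi.ker = TG.subgroupOf (Subgroup.normalizer (TG : Set Ggrp)) := by
  ext x
  have hP := (mem_norm_iff _).mp x.2
  simp only [MonoidHom.mem_ker, Subgroup.mem_subgroupOf]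
  show Delem (eps (x : Ggrp).left.1) (eps (x : Ggrp).left.2)
      (Multiplicative.toAdd (x : Ggrp).right) = 1 ↔ (x : Ggrp) ∈ TG
  rw [Delem_eq_one, mem_TG_iff]
  constructor
  · rintro ⟨h1, h2, h3⟩
    rw [eps_eq_zero_iff] at h1 h2
    have d1 : (((x : Ggrp).left.1 : SL2) : Matrix (Fin 2) (Fin 2) ℂ) 1 0 = 0 := by
      rcases hP.1 with ⟨_, h⟩ | ⟨ha, hb⟩
      · exact h
      · exact absurd h1 (antidiag_ne _ ha hb).1
    have d2 : (((x : Ggrp).left.2 : SL2) : Matrix (Fin 2) (Fin 2) ℂ) 1 0 = 0 := by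
      rcases hP.2 with ⟨_, h⟩ | ⟨ha, hb⟩
      · exact h
      · exact absurd h2 (antidiag_ne _ ha hb).1
    refine ⟨⟨h1, d1, h2, d2⟩, ?_⟩
    have h4 : Multiplicative.toAdd (x : Ggrp).right =
        Multiplicative.toAdd (1 : Multiplicative (ZMod 2)) := by rw [h3]; rfl
    exact Multiplicative.toAdd.injective h4
  · rintro ⟨⟨h1, _, h3, _⟩, hr⟩
    refine ⟨(eps_eq_zero_iff _).mpr h1, (eps_eq_zero_iff _).mpr h3, ?_⟩
    rw [hr]
    rfl

/-- The standard Weyl element of `SL2`. -/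
def wE : SL2 := ⟨!![(0 : ℂ), 1; -1, 0], by norm_num [Matrix.det_fin_two_of]⟩

lemma wE_pow (k : ZMod 2) : Pd (wE ^ k.val) ∧ eps (wE ^ k.val) = k := by
  rcases zmod2_cases k with h | h <;> subst h
  · rw [show ZMod.val (0 : ZMod 2) = 0 from rfl, pow_zero]
    have h1 : ((1 : SL2) : Matrix (Fin 2) (Fin 2) ℂ) 0 1 = 0 := by
      simp [Matrix.SpecialLinearGroup.coe_one, Matrix.one_apply]
    have h2 : ((1 : SL2) : Matrix (Fin 2) (Fin 2) ℂ) 1 0 = 0 := by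
      simp [Matrix.SpecialLinearGroup.coe_one, Matrix.one_apply]
    exact ⟨Or.inl ⟨h1, h2⟩, by simp [eps, h1]⟩
  · rw [show ZMod.val (1 : ZMod 2) = 1 from rfl, pow_one]
    have h1 : (wE : Matrix (Fin 2) (Fin 2) ℂ) 0 0 = 0 := by
      show (!![(0 : ℂ), 1; -1, 0]) 0 0 = 0; norm_num
    have h2 : (wE : Matrix (Fin 2) (Fin 2) ℂ) 1 1 = 0 := by
      show (!![(0 : ℂ), 1; -1, 0]) 1 1 = 0; norm_num
    have h3 : (wE : Matrix (Fin 2) (Fin 2) ℂ) 0 1 = 1 := by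
      show (!![(0 : ℂ), 1; -1, 0]) 0 1 = 1; norm_num
    refine ⟨Or.inr ⟨h1, h2⟩, ?_⟩
    rw [eps, if_neg (by rw [h3]; exact one_ne_zero)]

lemma Psi_surj : Function.Surjective Psi := by
  intro g
  obtain ⟨a, b, c, h⟩ := Delem_surj g
  refine ⟨⟨⟨(wE ^ a.val, wE ^ b.val), Multiplicative.ofAdd c⟩, ?_⟩, ?_⟩
  · rw [mem_norm_iff]
    exact ⟨(wE_pow a).1, (wE_pow b).1⟩
  · show Delem (eps (wE ^ a.val)) (eps (wE ^ b.val))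
      (Multiplicative.toAdd (Multiplicative.ofAdd c)) = g
    rw [(wE_pow a).2, (wE_pow b).2, toAdd_ofAdd]
    exact h

end WeylAux

/-- **The Weyl group of `G` is the dihedral group of order 8:** the quotient of the
normalizer of the maximal torus `T × {0}` in `G = (SL(2,ℂ) × SL(2,ℂ)) ⋊ ℤ/2ℤ` by
`T × {0}` is isomorphic to `DihedralGroup 4`. -/
theorem weyl_group_iso_dihedral :
    Nonempty ((Subgroup.normalizer (TG : Set Ggrp) ⧸ TG.subgroupOf (Subgroup.normalizer (TG : Set Ggrp))) ≃* DihedralGroup 4) := by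
  exact ⟨(QuotientGroup.quotientMulEquivOfEq Psi_ker.symm).trans
    (QuotientGroup.quotientKerEquivOfSurjective Psi Psi_surj)⟩
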